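/- Let λ > 1 and let f : [0,T] → [0,∞) be differentiable with f'(t) + c₁ f(t)^λ ≤ c₂ for all t ∈ [0,T], where c₁, c₂ > 0. Then for every t ∈ (0,T], f(t) ≤ max( f(0) / (1 + t f(0)^{λ-1} (λ-1) c₁/2)^{1/(λ-1)}, (2c₂/c₁)^{1/λ} ). -/

import Mathlib

open Real Set

/-- Comparison lemma: if `f' + c₁ f^λ ≤ c₂` on `[0,T]` then
`f t ≤ max (f 0 / (1 + t f(0)^(λ-1) (λ-1) c₁/2)^(1/(λ-1))) ((2c₂/c₁)^(1/λ))`. -/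
theorem stmt_0 (T lam c₁ c₂ : ℝ) (hT : 0 < T) (hlam : 1 < lam)
    (hc₁ : 0 < c₁) (hc₂ : 0 < c₂)
    (f f' : ℝ → ℝ)
    (hnonneg : ∀ t ∈ Icc (0:ℝ) T, 0 ≤ f t)
    (hderiv : ∀ t ∈ Icc (0:ℝ) T, HasDerivAt f (f' t) t)
    (hineq : ∀ t ∈ Icc (0:ℝ) T, f' t + c₁ * (f t) ^ lam ≤ c₂) :
    ∀ t ∈ Ioc (0:ℝ) T,
      f t ≤ max (f 0 / (1 + t * (f 0) ^ (lam - 1) * (lam - 1) * (c₁ / 2)) ^ (1 / (lam - 1)))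
              ((2 * c₂ / c₁) ^ (1 / lam)) := by
  intro t ht
  obtain ⟨ht0, htT⟩ := ht
  have hsub : Icc (0:ℝ) t ⊆ Icc 0 T := Icc_subset_Icc le_rfl htT
  set M := (2 * c₂ / c₁) ^ (1 / lam) with hMdef
  by_cases hcase : f t ≤ M
  · exact le_max_of_le_right hcase
  push_neg at hcase
  have hMpos : 0 < M := rpow_pos_of_pos (by positivity) _
  have hlam0 : (0:ℝ) < lam := by linarith
  have hMlam : c₁ * M ^ lam = 2 * c₂ := by
    rw [hMdef, ← rpow_mul (by positivity), one_div_mul_cancel hlam0.ne', rpow_one]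
    field_simp
  have key : ∀ s ∈ Icc (0:ℝ) t, M < f s → f' s ≤ -(c₁ / 2) * f s ^ lam := by
    intro s hs hMf
    have h1 := hineq s (hsub hs)
    have h2 : M ^ lam ≤ f s ^ lam := rpow_le_rpow hMpos.le hMf.le hlam0.le
    nlinarith [mul_le_mul_of_nonneg_left h2 hc₁.le]
  have hcont : ContinuousOn f (Icc 0 t) := fun s hs =>
    ((hderiv s (hsub hs)).continuousAt).continuousWithinAt
  have hall : ∀ s ∈ Icc (0:ℝ) t, M < f s := by
    by_contra hcon
    push_neg at hcon
    obtain ⟨s₁, hs₁, hfs₁⟩ := hcon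
    set S := {s ∈ Icc (0:ℝ) t | f s ≤ M} with hSdef
    have hSsub : S ⊆ Icc 0 t := fun s hs => hs.1
    have hScl : IsClosed S := by
      have : S = Icc 0 t ∩ f ⁻¹' (Iic M) := by ext s; simp [hSdef, and_comm]
      rw [this]
      exact ContinuousOn.preimage_isClosed_of_isClosed hcont isClosed_Icc isClosed_Iic
    have hSne : S.Nonempty := ⟨s₁, hs₁, hfs₁⟩
    have hSbdd : BddAbove S := ⟨t, fun s hs => hs.1.2⟩
    set s₀ := sSup S with hs₀def
    have hs₀mem : s₀ ∈ S := hScl.csSup_mem hSne hSbdd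
    have hs₀t : s₀ < t := lt_of_le_of_ne hs₀mem.1.2 (by
      intro h; exact absurd (h ▸ hs₀mem.2) (not_le.mpr hcase))
    have hgt : ∀ s ∈ Ioc s₀ t, M < f s := by
      intro s hs
      by_contra hle
      push_neg at hle
      have : s ≤ s₀ := le_csSup hSbdd ⟨⟨hs₀mem.1.1.trans hs.1.le, hs.2⟩, hle⟩
      exact absurd hs.1 (not_lt.mpr this)
    have hanti : AntitoneOn f (Icc s₀ t) := by
      apply antitoneOn_of_deriv_nonpos (convex_Icc s₀ t)
      · exact hcont.mono (Icc_subset_Icc hs₀mem.1.1 le_rfl)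
      · intro s hs
        rw [interior_Icc] at hs
        exact ((hderiv s (hsub ⟨hs₀mem.1.1.trans hs.1.le, hs.2.le⟩)).differentiableAt).differentiableWithinAt
      · intro s hs
        rw [interior_Icc] at hs
        have hsIcc : s ∈ Icc (0:ℝ) t := ⟨hs₀mem.1.1.trans hs.1.le, hs.2.le⟩
        rw [(hderiv s (hsub hsIcc)).deriv]
        have := key s hsIcc (hgt s ⟨hs.1, hs.2.le⟩)
        have hp : 0 ≤ f s ^ lam := rpow_nonneg (hnonneg s (hsub hsIcc)) _
        nlinarith
    have : f t ≤ f s₀ := hanti (left_mem_Icc.mpr hs₀t.le) (right_mem_Icc.mpr hs₀t.le) hs₀t.le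
    exact absurd (this.trans hs₀mem.2) (not_le.mpr hcase)
  -- now f > M on [0,t]
  have hf0pos : 0 < f 0 := hMpos.trans (hall 0 ⟨le_rfl, ht0.le⟩)
  set C := (lam - 1) * (c₁ / 2) with hCdef
  have hCpos : 0 < C := mul_pos (by linarith) (by linarith)
  set φ : ℝ → ℝ := fun s => f s ^ (1 - lam) - C * s with hφdef
  have hφderiv : ∀ s ∈ Icc (0:ℝ) t,
      HasDerivAt φ (f' s * (1 - lam) * f s ^ (1 - lam - 1) - C) s := by
    intro s hs
    have h1 : HasDerivAt (fun x => f x ^ (1 - lam)) (f' s * (1 - lam) * f s ^ (1 - lam - 1)) s :=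
      (hderiv s (hsub hs)).rpow_const (Or.inl (hMpos.trans (hall s hs)).ne')
    have h2 : HasDerivAt (fun x => C * x) C s := by
      simpa using (hasDerivAt_id s).const_mul C
    exact h1.sub h2
  have hφnonneg : ∀ s ∈ Icc (0:ℝ) t, 0 ≤ f' s * (1 - lam) * f s ^ (1 - lam - 1) - C := by
    intro s hs
    have hfspos : 0 < f s := hMpos.trans (hall s hs)
    have hk := key s hs (hall s hs)
    have he : (1 - lam - 1) = -lam := by ring
    rw [he]
    have hone : f s ^ lam * f s ^ (-lam) = 1 := by
      rw [← rpow_add hfspos]; simp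
    have hppos : 0 < f s ^ (-lam) := rpow_pos_of_pos hfspos _
    have hneg : (1 - lam) * f s ^ (-lam) ≤ 0 := by nlinarith
    have hm := mul_le_mul_of_nonpos_right hk hneg
    nlinarith [hm, hone]
  have hφmono : MonotoneOn φ (Icc 0 t) := by
    apply monotoneOn_of_deriv_nonneg (convex_Icc 0 t)
    · exact fun s hs => ((hφderiv s hs).continuousAt).continuousWithinAt
    · intro s hs
      rw [interior_Icc] at hs
      exact ((hφderiv s (Ioo_subset_Icc_self hs)).differentiableAt).differentiableWithinAt
    · intro s hs
      rw [interior_Icc] at hs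
      rw [(hφderiv s (Ioo_subset_Icc_self hs)).deriv]
      exact hφnonneg s (Ioo_subset_Icc_self hs)
  have hineq2 : f 0 ^ (1 - lam) + C * t ≤ f t ^ (1 - lam) := by
    have h := hφmono (left_mem_Icc.mpr ht0.le) (right_mem_Icc.mpr ht0.le) ht0.le
    simp only [hφdef] at h
    linarith
  -- conclude
  set A := f 0 ^ (1 - lam) + C * t with hAdef
  set B := 1 + t * (f 0) ^ (lam - 1) * (lam - 1) * (c₁ / 2) with hBdef
  have hApos : 0 < A := by
    have := rpow_pos_of_pos hf0pos (1 - lam)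
    nlinarith
  have hBpos : 0 < B := by
    have h1 : 0 < t * f 0 ^ (lam - 1) * (lam - 1) * (c₁ / 2) :=
      mul_pos (mul_pos (mul_pos ht0 (rpow_pos_of_pos hf0pos _)) (by linarith)) (by linarith)
    rw [hBdef]
    linarith
  have hftpos : 0 < f t := hMpos.trans hcase
  have hz : 1 / (1 - lam) ≤ 0 := by
    apply div_nonpos_of_nonneg_of_nonpos <;> linarith
  have hstep : f t ≤ A ^ (1 / (1 - lam)) := by
    have := rpow_le_rpow_of_nonpos hApos hineq2 hz
    rwa [← rpow_mul hftpos.le, mul_one_div_cancel (by linarith : (1:ℝ) - lam ≠ 0),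
      rpow_one] at this
  have hAB : A = f 0 ^ (1 - lam) * B := by
    have hone : f 0 ^ (1 - lam) * f 0 ^ (lam - 1) = 1 := by
      rw [← rpow_add hf0pos]; simp
    rw [hAdef, hBdef, hCdef]
    linear_combination (-(t * (lam - 1) * (c₁ / 2))) * hone
  have hRHS : A ^ (1 / (1 - lam)) = f 0 / B ^ (1 / (lam - 1)) := by
    rw [hAB, mul_rpow (rpow_nonneg hf0pos.le _) hBpos.le,
      ← rpow_mul hf0pos.le, mul_one_div_cancel (by linarith : (1:ℝ) - lam ≠ 0), rpow_one]
    have h1lam : (1:ℝ) - lam ≠ 0 := by linarith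
    have hlam1 : lam - (1:ℝ) ≠ 0 := by linarith
    have : (1 : ℝ) / (1 - lam) = -(1 / (lam - 1)) := by
      field_simp
      ring
    rw [this, rpow_neg hBpos.le, div_eq_mul_inv]
    ring_nf
  rw [hRHS] at hstep
  exact le_max_of_le_left hstep
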